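/- Let g be a semisimple Lie algebra over ℝ or ℂ with Killing form β. Let Ω, Λ, Π be the operators defined respectively by: (Ωσ)(x,y) = 2 tr((ad x)(ad y)Σ) where σ = β(Σ·,·); (Λσ)(x,y,z,z') = σ([x,y],[z,z']) + σ([y,z],[x,z']) + σ([z,x],[y,z']); and Π : tensors of rank 4 → tensors of rank 2 given on decomposables ξ⊗ξ'⊗η⊗η' (with ξ = β(x,·), etc.) by β([x,x'],·)⊗β([y,y'],·). Then on symmetric bilinear forms, 2·ΠΛ = −(Ω + Id)(Ω − 2·Id). -/

import Mathlib

set_option linter.unusedSectionVars false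
namespace ThmA

open LinearMap (trace)
open LieAlgebra (ad)
attribute [local instance] LieRing.ofAssociativeRing

variable {𝕜 : Type*} [RCLike 𝕜] {L : Type*} [LieRing L] [LieAlgebra 𝕜 L]
  [Module.Finite 𝕜 L]
  {ι : Type*} [Fintype ι] [DecidableEq ι]
  (b : Module.Basis ι 𝕜 L) (b' : ι → L)

local notation "β" => killingForm 𝕜 L

lemma ksymm (x y : L) : β x y = β y x := LieModule.traceForm_comm 𝕜 L L x y

lemma kinv (x y z : L) : β ⁅x, y⁆ z = β x ⁅y, z⁆ :=
  LieModule.traceForm_apply_lie_apply 𝕜 L L x y z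

lemma coefskew (x : L) (i j : ι) : β ⁅x, b i⁆ (b' j) = -(β ⁅x, b' j⁆ (b i)) := by
  rw [kinv, show (⁅b i, b' j⁆ : L) = -⁅b' j, b i⁆ by rw [lie_skew], map_neg, kinv]

lemma ad_add (y z : L) : ad 𝕜 L (y + z) = ad 𝕜 L y + ad 𝕜 L z := by
  ext w; simp [LieAlgebra.ad_apply, add_lie]

lemma ad_smul (c : 𝕜) (y : L) : ad 𝕜 L (c • y) = c • ad 𝕜 L y := by
  ext w; simp [LieAlgebra.ad_apply, smul_lie]

lemma ad_sum {κ : Type*} (s : Finset κ) (f : κ → L) :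
    ad 𝕜 L (∑ i ∈ s, f i) = ∑ i ∈ s, ad 𝕜 L (f i) := by
  exact map_sum (LieAlgebra.ad 𝕜 L).toLinearMap f s


lemma ad_lie (y z : L) :
    ad 𝕜 L ⁅y, z⁆ = ad 𝕜 L y * ad 𝕜 L z - ad 𝕜 L z * ad 𝕜 L y := by
  rw [LieHom.map_lie, Ring.lie_def]


lemma ad_neg (y : L) : ad 𝕜 L (-y) = -(ad 𝕜 L y) := by
  ext w; simp [LieAlgebra.ad_apply, neg_lie]

lemma lie_sum_right {κ : Type*} (f : κ → 𝕜) (c : κ → L) (p : L) (s : Finset κ) :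
    ⁅p, ∑ i ∈ s, f i • c i⁆ = ∑ i ∈ s, f i • ⁅p, c i⁆ := by
  have h1 := map_sum (ad 𝕜 L p) (fun i => f i • c i) s
  simp only [LieAlgebra.ad_apply, map_smul] at h1
  exact h1

lemma lie_sum_left {κ : Type*} (f : κ → 𝕜) (c : κ → L) (p : L) (s : Finset κ) :
    ⁅∑ i ∈ s, f i • c i, p⁆ = ∑ i ∈ s, f i • ⁅c i, p⁆ := by
  rw [← lie_skew, lie_sum_right, ← Finset.sum_neg_distrib]
  exact Finset.sum_congr rfl fun i _ => by rw [← smul_neg, lie_skew]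

lemma ad_nested (a c d : L) :
    ad 𝕜 L ⁅a, ⁅c, d⁆⁆
      = ad 𝕜 L a * ad 𝕜 L c * ad 𝕜 L d - ad 𝕜 L a * ad 𝕜 L d * ad 𝕜 L c
        - ad 𝕜 L c * ad 𝕜 L d * ad 𝕜 L a + ad 𝕜 L d * ad 𝕜 L c * ad 𝕜 L a := by
  rw [ad_lie a ⁅c, d⁆, ad_lie c d]
  noncomm_ring

lemma inv2 (u v p q : L) : β ⁅u, ⁅v, p⁆⁆ q = β p ⁅v, ⁅u, q⁆⁆ := by
  calc β ⁅u, ⁅v, p⁆⁆ q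
      = -(β ⁅⁅v, p⁆, u⁆ q) := by rw [show (⁅u, ⁅v, p⁆⁆ : L) = -⁅⁅v, p⁆, u⁆ by
          rw [lie_skew], map_neg, LinearMap.neg_apply]
    _ = -(β ⁅v, p⁆ ⁅u, q⁆) := by rw [kinv]
    _ = β ⁅p, v⁆ ⁅u, q⁆ := by rw [show (⁅v, p⁆ : L) = -⁅p, v⁆ by rw [lie_skew],
          map_neg, LinearMap.neg_apply, neg_neg]
    _ = β p ⁅v, ⁅u, q⁆⁆ := by rw [kinv]


variable (hdual : ∀ i j, killingForm 𝕜 L (b i) (b' j) = if i = j then 1 else 0)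
include hdual

lemma repr_eq (x : L) (i : ι) : b.repr x i = β x (b' i) := by
  conv_rhs => rw [← b.sum_repr x]
  simp [LinearMap.sum_apply, map_sum, hdual, -Module.Basis.sum_repr]

lemma expand1 (x : L) : ∑ i, β x (b' i) • b i = x := by
  simp only [← repr_eq b b' hdual]
  exact b.sum_repr x

lemma eq_dual {x y : L} (h : ∀ i, β x (b' i) = β y (b' i)) : x = y :=
  b.ext_elem (by simp [repr_eq b b' hdual, h])

lemma eq_left {x y : L} (h : ∀ z, β z x = β z y) : x = y := by
  refine eq_dual b b' hdual fun i => ?_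
  rw [ksymm x, ksymm y]; exact h (b' i)

lemma eq_bleft {x y : L} (h : ∀ j, β (b j) x = β (b j) y) : x = y := by
  refine eq_left b b' hdual fun z => ?_
  conv_lhs => rw [← b.sum_repr z]
  conv_rhs => rw [← b.sum_repr z]
  simp only [map_sum, map_smul, LinearMap.sum_apply, LinearMap.smul_apply]
  exact Finset.sum_congr rfl fun j _ => by rw [h j]

lemma expand2 (x : L) : ∑ i, β x (b i) • b' i = x := by
  refine eq_bleft b b' hdual fun j => ?_
  rw [map_sum]
  simp only [map_smul, smul_eq_mul, hdual]
  simp [ksymm x]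

lemma trace1 (f : Module.End 𝕜 L) : trace 𝕜 L f = ∑ i, β (f (b i)) (b' i) := by
  rw [LinearMap.trace_eq_matrix_trace 𝕜 b f, Matrix.trace]
  simp [Matrix.diag, LinearMap.toMatrix_apply, repr_eq b b' hdual]

lemma swap_sum {M : Type*} [AddCommMonoid M] [Module 𝕜 M]
    (F : L →ₗ[𝕜] L →ₗ[𝕜] M) : ∑ i, F (b i) (b' i) = ∑ i, F (b' i) (b i) := by
  have h : ∀ i : ι, b' i = ∑ j, β (b' i) (b' j) • b j :=
    fun i => (expand1 b b' hdual (b' i)).symm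
  calc ∑ i, F (b i) (b' i) = ∑ i, ∑ j, β (b' i) (b' j) • F (b i) (b j) := by
        refine Finset.sum_congr rfl fun i _ => ?_
        conv_lhs => rw [h i]
        simp [map_sum, map_smul]
    _ = ∑ i, ∑ j, β (b' j) (b' i) • F (b i) (b j) := by
        refine Finset.sum_congr rfl fun i _ => Finset.sum_congr rfl fun j _ => ?_
        rw [ksymm]
    _ = ∑ i, F (b' i) (b i) := by
        rw [Finset.sum_comm]
        refine Finset.sum_congr rfl fun j _ => ?_
        conv_rhs => rw [h j]
        simp [map_sum, map_smul]

lemma trace2 (f : Module.End 𝕜 L) : trace 𝕜 L f = ∑ i, β (f (b' i)) (b i) := by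
  rw [trace1 b b' hdual f]
  exact swap_sum b b' hdual ((killingForm 𝕜 L).compl₁₂ f LinearMap.id)

lemma casimir1 (y : L) : ∑ i, ⁅b' i, ⁅b i, y⁆⁆ = y := by
  refine eq_left b b' hdual fun z => ?_
  rw [map_sum]
  have key : ∀ i : ι, β z ⁅b' i, ⁅b i, y⁆⁆
      = β ((ad 𝕜 L z ∘ₗ ad 𝕜 L y) (b i)) (b' i) := by
    intro i
    calc β z ⁅b' i, ⁅b i, y⁆⁆
        = β ⁅z, b' i⁆ ⁅b i, y⁆ := (kinv _ _ _).symm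
      _ = -(β ⁅b' i, z⁆ ⁅b i, y⁆) := by
          rw [← lie_skew z (b' i)]; simp only [map_neg, LinearMap.neg_apply]
      _ = -(β (b' i) ⁅z, ⁅b i, y⁆⁆) := by rw [kinv]
      _ = β (b' i) ⁅z, ⁅y, b i⁆⁆ := by
          rw [← lie_skew y (b i)]; simp only [lie_neg, map_neg, neg_neg]
      _ = β ((ad 𝕜 L z ∘ₗ ad 𝕜 L y) (b i)) (b' i) := by
          rw [ksymm]; simp [LieAlgebra.ad_apply]
  rw [Finset.sum_congr rfl fun i _ => key i, ← trace1 b b' hdual,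
    ← killingForm_apply_apply]

lemma casimir2 (y : L) : ∑ i, ⁅b i, ⁅b' i, y⁆⁆ = y := by
  refine eq_left b b' hdual fun z => ?_
  rw [map_sum]
  have key : ∀ i : ι, β z ⁅b i, ⁅b' i, y⁆⁆
      = β ((ad 𝕜 L z ∘ₗ ad 𝕜 L y) (b' i)) (b i) := by
    intro i
    calc β z ⁅b i, ⁅b' i, y⁆⁆
        = β ⁅z, b i⁆ ⁅b' i, y⁆ := (kinv _ _ _).symm
      _ = -(β ⁅b i, z⁆ ⁅b' i, y⁆) := by
          rw [← lie_skew z (b i)]; simp only [map_neg, LinearMap.neg_apply]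
      _ = -(β (b i) ⁅z, ⁅b' i, y⁆⁆) := by rw [kinv]
      _ = β (b i) ⁅z, ⁅y, b' i⁆⁆ := by
          rw [← lie_skew y (b' i)]; simp only [lie_neg, map_neg, neg_neg]
      _ = β ((ad 𝕜 L z ∘ₗ ad 𝕜 L y) (b' i)) (b i) := by
          rw [ksymm]; simp [LieAlgebra.ad_apply]
  rw [Finset.sum_congr rfl fun i _ => key i, ← trace2 b b' hdual,
    ← killingForm_apply_apply]

lemma sum_lie_self : ∑ i, ⁅b i, b' i⁆ = (0 : L) := by
  have h := swap_sum b b' hdual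
    (LinearMap.mk₂ 𝕜 (fun p q => (⁅p, q⁆ : L))
      (fun p p' q => add_lie p p' q) (fun c p q => smul_lie c p q)
      (fun p q q' => lie_add p q q') (fun c p q => lie_smul c p q))
  simp only [LinearMap.mk₂_apply] at h
  have h2 : ∑ i, ⁅b i, b' i⁆ = -∑ i, (⁅b i, b' i⁆ : L) := by
    conv_lhs => rw [h]
    rw [← Finset.sum_neg_distrib]
    exact Finset.sum_congr rfl fun i _ => (lie_skew (b' i) (b i)).symm
  have h3 : (2 : 𝕜) • ∑ i, ⁅b i, b' i⁆ = (0 : L) := by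
    rw [two_smul]
    rw [eq_neg_iff_add_eq_zero] at h2
    exact h2
  have h4 := smul_eq_zero.mp h3
  rcases h4 with h4 | h4
  · exact absurd h4 (by norm_num)
  · exact h4

lemma casimir_mixed (x : L) : ∑ i, ⁅b i, ⁅x, b' i⁆⁆ = -x := by
  have key : ∀ i : ι, ⁅b i, ⁅x, b' i⁆⁆ = -⁅b' i, ⁅b i, x⁆⁆ + ⁅x, ⁅b i, b' i⁆⁆ := by
    intro i
    rw [leibniz_lie (b i) x (b' i)]
    rw [show (⁅⁅b i, x⁆, b' i⁆ : L) = -⁅b' i, ⁅b i, x⁆⁆ by rw [← lie_skew]]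
  have hx : ∑ i, ⁅x, ⁅b i, b' i⁆⁆ = (0 : L) := by
    have h5 : ∑ i, ad 𝕜 L x ⁅b i, b' i⁆ = ad 𝕜 L x (∑ i, ⁅b i, b' i⁆) :=
      (map_sum _ _ _).symm
    simp only [LieAlgebra.ad_apply] at h5
    rw [h5, sum_lie_self b b' hdual, lie_zero]
  rw [Finset.sum_congr rfl fun i _ => key i, Finset.sum_add_distrib,
    Finset.sum_neg_distrib, casimir1 b b' hdual, hx, add_zero]

lemma cas1_op : ∑ i, ad 𝕜 L (b' i) * ad 𝕜 L (b i) = (1 : Module.End 𝕜 L) := by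
  ext y
  simp only [LinearMap.sum_apply, Module.End.mul_apply, LieAlgebra.ad_apply,
    Module.End.one_apply]
  exact casimir1 b b' hdual y

lemma cas2_op : ∑ i, ad 𝕜 L (b i) * ad 𝕜 L (b' i) = (1 : Module.End 𝕜 L) := by
  ext y
  simp only [LinearMap.sum_apply, Module.End.mul_apply, LieAlgebra.ad_apply,
    Module.End.one_apply]
  exact casimir2 b b' hdual y

lemma half (x : L) :
    ∑ i, ad 𝕜 L (b' i) * ad 𝕜 L x * ad 𝕜 L (b i) = (2⁻¹ : 𝕜) • ad 𝕜 L x := by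
  have hcomm : ∀ i : ι, ad 𝕜 L x * ad 𝕜 L (b i)
      = ad 𝕜 L (b i) * ad 𝕜 L x + ad 𝕜 L ⁅x, b i⁆ := by
    intro i
    rw [ad_lie]
    abel
  have h1 : ∑ i, ad 𝕜 L (b' i) * ad 𝕜 L x * ad 𝕜 L (b i)
      = (∑ i, ad 𝕜 L (b' i) * ad 𝕜 L ⁅x, b i⁆) + ad 𝕜 L x := by
    have key : ∀ i : ι, ad 𝕜 L (b' i) * ad 𝕜 L x * ad 𝕜 L (b i)
        = ad 𝕜 L (b' i) * ad 𝕜 L (b i) * ad 𝕜 L x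
          + ad 𝕜 L (b' i) * ad 𝕜 L ⁅x, b i⁆ := by
      intro i
      rw [mul_assoc, hcomm i, mul_add, ← mul_assoc]
    rw [Finset.sum_congr rfl fun i _ => key i, Finset.sum_add_distrib,
      ← Finset.sum_mul, cas1_op b b' hdual, one_mul]
    abel
  have h2 : ∑ i, ad 𝕜 L (b' i) * ad 𝕜 L ⁅x, b i⁆
      = -∑ j, ad 𝕜 L ⁅x, b' j⁆ * ad 𝕜 L (b j) := by
    have hexp : ∀ i : ι, ad 𝕜 L ⁅x, b i⁆
        = ∑ j, β ⁅x, b i⁆ (b' j) • ad 𝕜 L (b j) := by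
      intro i
      conv_lhs => rw [show (⁅x, b i⁆ : L) = ∑ j, β ⁅x, b i⁆ (b' j) • b j from
        (expand1 b b' hdual _).symm]
      rw [ad_sum]
      exact Finset.sum_congr rfl fun j _ => by rw [ad_smul]
    calc ∑ i, ad 𝕜 L (b' i) * ad 𝕜 L ⁅x, b i⁆
        = ∑ i, ∑ j, β ⁅x, b i⁆ (b' j) • (ad 𝕜 L (b' i) * ad 𝕜 L (b j)) := by
          refine Finset.sum_congr rfl fun i _ => ?_
          rw [hexp i, Finset.mul_sum]
          exact Finset.sum_congr rfl fun j _ => by rw [mul_smul_comm]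
      _ = ∑ j, ∑ i, -((β ⁅x, b' j⁆ (b i)) • (ad 𝕜 L (b' i) * ad 𝕜 L (b j))) := by
          rw [Finset.sum_comm]
          exact Finset.sum_congr rfl fun j _ => Finset.sum_congr rfl fun i _ => by
            rw [coefskew b b', neg_smul]
      _ = -∑ j, ad 𝕜 L ⁅x, b' j⁆ * ad 𝕜 L (b j) := by
          rw [← Finset.sum_neg_distrib]
          refine Finset.sum_congr rfl fun j _ => ?_
          have key : ad 𝕜 L ⁅x, b' j⁆ = ∑ i, (β ⁅x, b' j⁆ (b i)) • ad 𝕜 L (b' i) := by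
            conv_lhs => rw [show (⁅x, b' j⁆ : L) = ∑ i, β ⁅x, b' j⁆ (b i) • b' i from
              (expand2 b b' hdual _).symm]
            rw [ad_sum]
            exact Finset.sum_congr rfl fun i _ => by rw [ad_smul]
          rw [key, Finset.sum_mul, ← Finset.sum_neg_distrib]
          exact Finset.sum_congr rfl fun i _ => by rw [smul_mul_assoc]
  have h3 : ∑ i, ad 𝕜 L (b' i) * ad 𝕜 L ⁅x, b i⁆
      = ∑ i, ad 𝕜 L (b i) * ad 𝕜 L ⁅x, b' i⁆ := by
    have := swap_sum b b' hdual
      (LinearMap.mk₂ 𝕜 (fun p q => ad 𝕜 L p * ad 𝕜 L ⁅x, q⁆)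
        (fun p p' q => by simp only [ad_add, add_mul])
        (fun c p q => by simp only [ad_smul, smul_mul_assoc])
        (fun p q q' => by simp only [lie_add, ad_add, mul_add])
        (fun c p q => by simp only [lie_smul, ad_smul, mul_smul_comm]))
    simpa only [LinearMap.mk₂_apply] using this.symm
  have h4 : (∑ i, ad 𝕜 L (b i) * ad 𝕜 L ⁅x, b' i⁆)
      - (∑ i, ad 𝕜 L ⁅x, b' i⁆ * ad 𝕜 L (b i)) = -(ad 𝕜 L x) := by
    rw [← Finset.sum_sub_distrib]
    have key : ∀ i : ι, ad 𝕜 L (b i) * ad 𝕜 L ⁅x, b' i⁆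
        - ad 𝕜 L ⁅x, b' i⁆ * ad 𝕜 L (b i) = ad 𝕜 L ⁅b i, ⁅x, b' i⁆⁆ := fun i =>
      (ad_lie _ _).symm
    rw [Finset.sum_congr rfl fun i _ => key i,
      show ∑ i, ad 𝕜 L ⁅b i, ⁅x, b' i⁆⁆ = ad 𝕜 L (∑ i, ⁅b i, ⁅x, b' i⁆⁆) from
        (ad_sum _ _).symm,
      casimir_mixed b b' hdual, ad_neg]
  set T := ∑ i, ad 𝕜 L (b' i) * ad 𝕜 L ⁅x, b i⁆ with hTdef
  have h5 : T + T = -(ad 𝕜 L x) := by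
    have e1 : ∑ i, ad 𝕜 L ⁅x, b' i⁆ * ad 𝕜 L (b i) = -T := by
      rw [h2]; simp
    rw [← h4, ← h3, e1]
    abel
  have h6 : T = (2⁻¹ : 𝕜) • -(ad 𝕜 L x) := by
    rw [← h5, smul_add]
    rw [show ((2⁻¹ : 𝕜) • T + (2⁻¹ : 𝕜) • T : Module.End 𝕜 L)
      = ((2⁻¹ : 𝕜) + (2⁻¹ : 𝕜)) • T from (add_smul _ _ _).symm]
    norm_num
  rw [h1, h6, smul_neg]
  module

lemma half' (x : L) :
    ∑ i, ad 𝕜 L (b i) * ad 𝕜 L x * ad 𝕜 L (b' i) = (2⁻¹ : 𝕜) • ad 𝕜 L x := by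
  have := swap_sum b b' hdual
    (LinearMap.mk₂ 𝕜 (fun p q => ad 𝕜 L p * ad 𝕜 L x * ad 𝕜 L q)
      (fun p p' q => by simp only [ad_add, add_mul, add_mul])
      (fun c p q => by simp only [ad_smul, smul_mul_assoc, smul_mul_assoc])
      (fun p q q' => by simp only [ad_add, mul_add])
      (fun c p q => by simp only [ad_smul, mul_smul_comm]))
  simp only [LinearMap.mk₂_apply] at this
  rw [this, half b b' hdual]

lemma XIlem (B : Module.End 𝕜 L) (w : L) :
    ∑ j, β (b j) (B ⁅b' j, w⁆) = -(LinearMap.trace 𝕜 L (B * ad 𝕜 L w)) := by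
  have hsw := swap_sum b b' hdual
    (LinearMap.mk₂ 𝕜 (fun p q => β p (B ⁅q, w⁆))
      (fun p p' q => by simp only [map_add, LinearMap.add_apply])
      (fun c p q => by simp only [map_smul, LinearMap.smul_apply])
      (fun p q q' => by simp only [add_lie, map_add, map_add])
      (fun c p q => by simp only [smul_lie, map_smul, map_smul]))
  simp only [LinearMap.mk₂_apply] at hsw
  rw [hsw]
  have key : ∀ j : ι, β (b' j) (B ⁅b j, w⁆)
      = -(β ((B * ad 𝕜 L w) (b j)) (b' j)) := by
    intro j
    rw [show (⁅b j, w⁆ : L) = -(ad 𝕜 L w (b j)) by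
      rw [LieAlgebra.ad_apply, lie_skew], map_neg, map_neg, ksymm]
    rfl
  rw [Finset.sum_congr rfl fun j _ => key j, Finset.sum_neg_distrib,
    ← trace1 b b' hdual]

lemma coefβ (z : L) (i : ι) : β (b' i) z = b.repr z i := by
  rw [ksymm, ← repr_eq b b' hdual]

lemma contrS1 (τ : L →ₗ[𝕜] L →ₗ[𝕜] 𝕜) (w p z : L) :
    ∑ i, τ w ⁅b i, p⁆ * β (b' i) z = τ w ⁅z, p⁆ := by
  conv_rhs => rw [← b.sum_repr z]
  rw [lie_sum_left, map_sum]
  refine Finset.sum_congr rfl fun i _ => ?_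
  rw [map_smul, smul_eq_mul, coefβ b b' hdual, mul_comm]

lemma contrS2 (τ : L →ₗ[𝕜] L →ₗ[𝕜] 𝕜) (w p z : L) :
    ∑ i, τ w ⁅p, b i⁆ * β (b' i) z = τ w ⁅p, z⁆ := by
  conv_rhs => rw [← b.sum_repr z]
  rw [lie_sum_right, map_sum]
  refine Finset.sum_congr rfl fun i _ => ?_
  rw [map_smul, smul_eq_mul, coefβ b b' hdual, mul_comm]

lemma contrS3 (τ : L →ₗ[𝕜] L →ₗ[𝕜] 𝕜) (p w z : L) :
    ∑ i, τ ⁅p, b i⁆ w * β (b' i) z = τ ⁅p, z⁆ w := by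
  conv_rhs => rw [← b.sum_repr z]
  rw [lie_sum_right, map_sum, LinearMap.sum_apply]
  refine Finset.sum_congr rfl fun i _ => ?_
  rw [map_smul, LinearMap.smul_apply, smul_eq_mul, coefβ b b' hdual, mul_comm]

lemma casτ2 (τ : L →ₗ[𝕜] L →ₗ[𝕜] 𝕜) (w v : L) :
    ∑ k, τ w ⁅b k, ⁅b' k, v⁆⁆ = τ w v := by
  conv_rhs => rw [← casimir2 b b' hdual v]
  rw [map_sum]

lemma casτ1 (τ : L →ₗ[𝕜] L →ₗ[𝕜] 𝕜) (u w : L) :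
    ∑ i, τ ⁅b i, ⁅b' i, u⁆⁆ w = τ u w := by
  conv_rhs => rw [← casimir2 b b' hdual u]
  rw [map_sum, LinearMap.sum_apply]


lemma trace_S' (S S' : Module.End 𝕜 L)
    (hS' : ∀ x y : L, β (S' x) y
      = 2 * LinearMap.trace 𝕜 L (ad 𝕜 L x ∘ₗ ad 𝕜 L y ∘ₗ S)) (u v : L) :
    LinearMap.trace 𝕜 L (ad 𝕜 L u ∘ₗ ad 𝕜 L v ∘ₗ S')
      = 2 * (∑ i, LinearMap.trace 𝕜 L
            (ad 𝕜 L (b' i) * S * ad 𝕜 L (b i) * ad 𝕜 L v * ad 𝕜 L u))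
        - LinearMap.trace 𝕜 L (ad 𝕜 L v * ad 𝕜 L u * S)
        + LinearMap.trace 𝕜 L (ad 𝕜 L u * ad 𝕜 L v * S) := by
  have e0 : ∀ i : ι, β ((ad 𝕜 L u ∘ₗ ad 𝕜 L v ∘ₗ S') (b i)) (b' i)
      = 2 * LinearMap.trace 𝕜 L
          (ad 𝕜 L (b i) * (ad 𝕜 L ⁅v, ⁅u, b' i⁆⁆ * S)) := by
    intro i
    have h1 : (ad 𝕜 L u ∘ₗ ad 𝕜 L v ∘ₗ S') (b i) = ⁅u, ⁅v, S' (b i)⁆⁆ := by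
      simp [LieAlgebra.ad_apply]
    rw [h1, inv2, hS']
    rfl
  have e1 : ∀ i : ι, ad 𝕜 L (b i) * (ad 𝕜 L ⁅v, ⁅u, b' i⁆⁆ * S)
      = (ad 𝕜 L (b i) * ad 𝕜 L v * ad 𝕜 L u) * (ad 𝕜 L (b' i) * S)
        - (ad 𝕜 L (b i) * ad 𝕜 L v * ad 𝕜 L (b' i)) * (ad 𝕜 L u * S)
        - (ad 𝕜 L (b i) * ad 𝕜 L u * ad 𝕜 L (b' i)) * (ad 𝕜 L v * S)
        + (ad 𝕜 L (b i) * ad 𝕜 L (b' i)) * (ad 𝕜 L u * ad 𝕜 L v * S) := by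
    intro i
    rw [ad_nested v u (b' i)]
    noncomm_ring
  have hA : ∑ i, LinearMap.trace 𝕜 L
        ((ad 𝕜 L (b i) * ad 𝕜 L v * ad 𝕜 L u) * (ad 𝕜 L (b' i) * S))
      = ∑ i, LinearMap.trace 𝕜 L
        (ad 𝕜 L (b' i) * S * ad 𝕜 L (b i) * ad 𝕜 L v * ad 𝕜 L u) := by
    refine Finset.sum_congr rfl fun i _ => ?_
    rw [LinearMap.trace_mul_comm]
    simp only [mul_assoc]
  have hB : ∑ i, LinearMap.trace 𝕜 L
        ((ad 𝕜 L (b i) * ad 𝕜 L v * ad 𝕜 L (b' i)) * (ad 𝕜 L u * S))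
      = 2⁻¹ * LinearMap.trace 𝕜 L (ad 𝕜 L v * ad 𝕜 L u * S) := by
    rw [← map_sum, ← Finset.sum_mul, half' b b' hdual v, smul_mul_assoc, map_smul,
      smul_eq_mul, mul_assoc]
  have hC : ∑ i, LinearMap.trace 𝕜 L
        ((ad 𝕜 L (b i) * ad 𝕜 L u * ad 𝕜 L (b' i)) * (ad 𝕜 L v * S))
      = 2⁻¹ * LinearMap.trace 𝕜 L (ad 𝕜 L u * ad 𝕜 L v * S) := by
    rw [← map_sum, ← Finset.sum_mul, half' b b' hdual u, smul_mul_assoc, map_smul,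
      smul_eq_mul, mul_assoc]
  have hD : ∑ i, LinearMap.trace 𝕜 L
        ((ad 𝕜 L (b i) * ad 𝕜 L (b' i)) * (ad 𝕜 L u * ad 𝕜 L v * S))
      = LinearMap.trace 𝕜 L (ad 𝕜 L u * ad 𝕜 L v * S) := by
    rw [← map_sum, ← Finset.sum_mul, cas2_op b b' hdual, one_mul]
  calc LinearMap.trace 𝕜 L (ad 𝕜 L u ∘ₗ ad 𝕜 L v ∘ₗ S')
      = ∑ i, β ((ad 𝕜 L u ∘ₗ ad 𝕜 L v ∘ₗ S') (b i)) (b' i) := trace1 b b' hdual _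
    _ = ∑ i, 2 * (LinearMap.trace 𝕜 L
            ((ad 𝕜 L (b i) * ad 𝕜 L v * ad 𝕜 L u) * (ad 𝕜 L (b' i) * S))
          - LinearMap.trace 𝕜 L
            ((ad 𝕜 L (b i) * ad 𝕜 L v * ad 𝕜 L (b' i)) * (ad 𝕜 L u * S))
          - LinearMap.trace 𝕜 L
            ((ad 𝕜 L (b i) * ad 𝕜 L u * ad 𝕜 L (b' i)) * (ad 𝕜 L v * S))
          + LinearMap.trace 𝕜 L
            ((ad 𝕜 L (b i) * ad 𝕜 L (b' i)) * (ad 𝕜 L u * ad 𝕜 L v * S))) := by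
        refine Finset.sum_congr rfl fun i _ => ?_
        rw [e0 i, e1 i, map_add, map_sub, map_sub]
    _ = 2 * ((∑ i, LinearMap.trace 𝕜 L
            ((ad 𝕜 L (b i) * ad 𝕜 L v * ad 𝕜 L u) * (ad 𝕜 L (b' i) * S)))
          - (∑ i, LinearMap.trace 𝕜 L
            ((ad 𝕜 L (b i) * ad 𝕜 L v * ad 𝕜 L (b' i)) * (ad 𝕜 L u * S)))
          - (∑ i, LinearMap.trace 𝕜 L
            ((ad 𝕜 L (b i) * ad 𝕜 L u * ad 𝕜 L (b' i)) * (ad 𝕜 L v * S)))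
          + (∑ i, LinearMap.trace 𝕜 L
            ((ad 𝕜 L (b i) * ad 𝕜 L (b' i)) * (ad 𝕜 L u * ad 𝕜 L v * S)))) := by
        rw [← Finset.mul_sum, Finset.sum_add_distrib, Finset.sum_sub_distrib,
          Finset.sum_sub_distrib]
    _ = 2 * ((∑ i, LinearMap.trace 𝕜 L
            (ad 𝕜 L (b' i) * S * ad 𝕜 L (b i) * ad 𝕜 L v * ad 𝕜 L u))
          - 2⁻¹ * LinearMap.trace 𝕜 L (ad 𝕜 L v * ad 𝕜 L u * S)
          - 2⁻¹ * LinearMap.trace 𝕜 L (ad 𝕜 L u * ad 𝕜 L v * S)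
          + LinearMap.trace 𝕜 L (ad 𝕜 L u * ad 𝕜 L v * S)) := by
        rw [hA, hB, hC, hD]
    _ = 2 * (∑ i, LinearMap.trace 𝕜 L
            (ad 𝕜 L (b' i) * S * ad 𝕜 L (b i) * ad 𝕜 L v * ad 𝕜 L u))
        - LinearMap.trace 𝕜 L (ad 𝕜 L v * ad 𝕜 L u * S)
        + LinearMap.trace 𝕜 L (ad 𝕜 L u * ad 𝕜 L v * S) := by ring


lemma Zform (σ : L →ₗ[𝕜] L →ₗ[𝕜] 𝕜) (hσ : ∀ x y, σ x y = σ y x)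
    (S : Module.End 𝕜 L) (hS : ∀ x y : L, β (S x) y = σ x y) (u v : L) :
    ∑ j, ∑ k, σ ⁅b j, b k⁆ ⁅⁅b' j, u⁆, ⁅b' k, v⁆⁆
      = (∑ i, LinearMap.trace 𝕜 L
            (ad 𝕜 L (b' i) * S * ad 𝕜 L (b i) * ad 𝕜 L v * ad 𝕜 L u))
        - 2⁻¹ * LinearMap.trace 𝕜 L (ad 𝕜 L v * ad 𝕜 L u * S) := by
  have hSsa : ∀ x y : L, β (S x) y = β x (S y) := by
    intro x y
    rw [hS x y, hσ x y, ← hS y x, ksymm]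
  have e0 : ∀ j k : ι, σ ⁅b j, b k⁆ ⁅⁅b' j, u⁆, ⁅b' k, v⁆⁆
      = β (b j) ((ad 𝕜 L (b k) * S) ⁅b' j, ⁅u, ⁅b' k, v⁆⁆⁆)
        - β (b j) ((ad 𝕜 L (b k) * S * ad 𝕜 L u) ⁅b' j, ⁅b' k, v⁆⁆) := by
    intro j k
    rw [← hS, hSsa, kinv, lie_lie, map_sub, lie_sub, map_sub]
    simp only [Module.End.mul_apply, LieAlgebra.ad_apply]
  have e1 : ∀ k : ι, ∑ j, σ ⁅b j, b k⁆ ⁅⁅b' j, u⁆, ⁅b' k, v⁆⁆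
      = -(LinearMap.trace 𝕜 L ((ad 𝕜 L (b k) * S) * ad 𝕜 L ⁅u, ⁅b' k, v⁆⁆))
        + LinearMap.trace 𝕜 L ((ad 𝕜 L (b k) * S * ad 𝕜 L u) * ad 𝕜 L ⁅b' k, v⁆) := by
    intro k
    rw [Finset.sum_congr rfl fun j _ => e0 j k, Finset.sum_sub_distrib,
      XIlem b b' hdual (ad 𝕜 L (b k) * S) ⁅u, ⁅b' k, v⁆⁆,
      XIlem b b' hdual (ad 𝕜 L (b k) * S * ad 𝕜 L u) ⁅b' k, v⁆]
    ring
  have e2 : ∀ k : ι,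
      -(LinearMap.trace 𝕜 L ((ad 𝕜 L (b k) * S) * ad 𝕜 L ⁅u, ⁅b' k, v⁆⁆))
        + LinearMap.trace 𝕜 L ((ad 𝕜 L (b k) * S * ad 𝕜 L u) * ad 𝕜 L ⁅b' k, v⁆)
      = LinearMap.trace 𝕜 L
          ((ad 𝕜 L (b k) * S * ad 𝕜 L (b' k)) * (ad 𝕜 L v * ad 𝕜 L u))
        - LinearMap.trace 𝕜 L
          ((ad 𝕜 L (b k) * S * ad 𝕜 L v) * (ad 𝕜 L (b' k) * ad 𝕜 L u)) := by
    intro k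
    calc -(LinearMap.trace 𝕜 L ((ad 𝕜 L (b k) * S) * ad 𝕜 L ⁅u, ⁅b' k, v⁆⁆))
          + LinearMap.trace 𝕜 L ((ad 𝕜 L (b k) * S * ad 𝕜 L u) * ad 𝕜 L ⁅b' k, v⁆)
        = LinearMap.trace 𝕜 L ((ad 𝕜 L (b k) * S * ad 𝕜 L u) * ad 𝕜 L ⁅b' k, v⁆
            - (ad 𝕜 L (b k) * S) * ad 𝕜 L ⁅u, ⁅b' k, v⁆⁆) := by
          rw [map_sub]; ring
      _ = LinearMap.trace 𝕜 L
            ((ad 𝕜 L (b k) * S * ad 𝕜 L (b' k)) * (ad 𝕜 L v * ad 𝕜 L u)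
              - (ad 𝕜 L (b k) * S * ad 𝕜 L v) * (ad 𝕜 L (b' k) * ad 𝕜 L u)) := by
          congr 1
          rw [ad_nested u (b' k) v, ad_lie (b' k) v]
          noncomm_ring
      _ = _ := map_sub _ _ _
  have e3 : ∑ k, LinearMap.trace 𝕜 L
        ((ad 𝕜 L (b k) * S * ad 𝕜 L (b' k)) * (ad 𝕜 L v * ad 𝕜 L u))
      = ∑ i, LinearMap.trace 𝕜 L
        (ad 𝕜 L (b' i) * S * ad 𝕜 L (b i) * ad 𝕜 L v * ad 𝕜 L u) := by
    have hsw := swap_sum b b' hdual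
      (LinearMap.mk₂ 𝕜 (fun p q => ad 𝕜 L p * S * ad 𝕜 L q)
        (fun p p' q => by simp only [ad_add, add_mul])
        (fun c p q => by simp only [ad_smul, smul_mul_assoc])
        (fun p q q' => by simp only [ad_add, mul_add])
        (fun c p q => by simp only [ad_smul, mul_smul_comm]))
    simp only [LinearMap.mk₂_apply] at hsw
    rw [← map_sum, ← Finset.sum_mul, hsw, Finset.sum_mul, map_sum]
    refine Finset.sum_congr rfl fun i _ => ?_
    simp only [mul_assoc]
  have e4 : ∑ k, LinearMap.trace 𝕜 L
        ((ad 𝕜 L (b k) * S * ad 𝕜 L v) * (ad 𝕜 L (b' k) * ad 𝕜 L u))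
      = 2⁻¹ * LinearMap.trace 𝕜 L (ad 𝕜 L v * ad 𝕜 L u * S) := by
    have h1 : ∀ k : ι, LinearMap.trace 𝕜 L
          ((ad 𝕜 L (b k) * S * ad 𝕜 L v) * (ad 𝕜 L (b' k) * ad 𝕜 L u))
        = LinearMap.trace 𝕜 L
          ((ad 𝕜 L (b' k) * ad 𝕜 L u * ad 𝕜 L (b k)) * (S * ad 𝕜 L v)) := by
      intro k
      rw [LinearMap.trace_mul_comm]
      simp only [mul_assoc]
    rw [Finset.sum_congr rfl fun k _ => h1 k, ← map_sum, ← Finset.sum_mul,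
      half b b' hdual u, smul_mul_assoc, map_smul, smul_eq_mul]
    congr 1
    calc LinearMap.trace 𝕜 L (ad 𝕜 L u * (S * ad 𝕜 L v))
        = LinearMap.trace 𝕜 L ((S * ad 𝕜 L v) * ad 𝕜 L u) :=
          LinearMap.trace_mul_comm 𝕜 _ _
      _ = LinearMap.trace 𝕜 L (S * (ad 𝕜 L v * ad 𝕜 L u)) := by
          simp only [mul_assoc]
      _ = LinearMap.trace 𝕜 L (ad 𝕜 L v * ad 𝕜 L u * S) :=
          LinearMap.trace_mul_comm 𝕜 _ _
  calc ∑ j, ∑ k, σ ⁅b j, b k⁆ ⁅⁅b' j, u⁆, ⁅b' k, v⁆⁆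
      = ∑ k, ∑ j, σ ⁅b j, b k⁆ ⁅⁅b' j, u⁆, ⁅b' k, v⁆⁆ := Finset.sum_comm
    _ = ∑ k, (LinearMap.trace 𝕜 L
          ((ad 𝕜 L (b k) * S * ad 𝕜 L (b' k)) * (ad 𝕜 L v * ad 𝕜 L u))
        - LinearMap.trace 𝕜 L
          ((ad 𝕜 L (b k) * S * ad 𝕜 L v) * (ad 𝕜 L (b' k) * ad 𝕜 L u))) := by
        refine Finset.sum_congr rfl fun k _ => ?_
        rw [e1 k, e2 k]
    _ = (∑ k, LinearMap.trace 𝕜 L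
          ((ad 𝕜 L (b k) * S * ad 𝕜 L (b' k)) * (ad 𝕜 L v * ad 𝕜 L u)))
        - ∑ k, LinearMap.trace 𝕜 L
          ((ad 𝕜 L (b k) * S * ad 𝕜 L v) * (ad 𝕜 L (b' k) * ad 𝕜 L u)) :=
        Finset.sum_sub_distrib _ _
    _ = _ := by rw [e3, e4]

end ThmA


open ThmA in
/-- Theorem A: In a semisimple Lie algebra `g` over `ℝ` or `ℂ`,
`2·ΠΛ = −(Ω + Id)(Ω − 2·Id)` on symmetric bilinear forms.  Here, for a basis `b` with
`β`-dual basis `b'`, `Π` of a 4-form `ζ` is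
`(Πζ)(u,v) = ∑ ζ(b i, b j, b k, b l)·β([b' i, b' j], u)·β([b' k, b' l], v)`,
`Λσ` is as in (1.4), `Σ` realizes `σ` via `β`, and `Σ'` realizes `Ωσ`. -/
theorem two_pi_lambda_eq_neg_omega_poly
    {𝕜 : Type*} [RCLike 𝕜] {L : Type*} [LieRing L] [LieAlgebra 𝕜 L]
    [Module.Finite 𝕜 L] [LieAlgebra.IsSemisimple 𝕜 L]
    {ι : Type*} [Fintype ι] [DecidableEq ι] (b : Module.Basis ι 𝕜 L) (b' : ι → L)
    (hdual : ∀ i j, killingForm 𝕜 L (b i) (b' j) = if i = j then 1 else 0)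
    (σ : L →ₗ[𝕜] L →ₗ[𝕜] 𝕜) (hσ : ∀ x y, σ x y = σ y x)
    (S : L →ₗ[𝕜] L) (hS : ∀ x y : L, killingForm 𝕜 L (S x) y = σ x y)
    (S' : L →ₗ[𝕜] L)
    (hS' : ∀ x y : L, killingForm 𝕜 L (S' x) y =
      2 * LinearMap.trace 𝕜 L ((LieAlgebra.ad 𝕜 L x) ∘ₗ (LieAlgebra.ad 𝕜 L y) ∘ₗ S)) :
    ∀ u v : L,
      2 * ∑ i, ∑ j, ∑ k, ∑ l,
        (σ ⁅b i, b j⁆ ⁅b k, b l⁆ + σ ⁅b j, b k⁆ ⁅b i, b l⁆ + σ ⁅b k, b i⁆ ⁅b j, b l⁆) *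
          killingForm 𝕜 L ⁅b' i, b' j⁆ u * killingForm 𝕜 L ⁅b' k, b' l⁆ v
      = -((2 * LinearMap.trace 𝕜 L
              ((LieAlgebra.ad 𝕜 L u) ∘ₗ (LieAlgebra.ad 𝕜 L v) ∘ₗ S'))
          - (2 * LinearMap.trace 𝕜 L
              ((LieAlgebra.ad 𝕜 L u) ∘ₗ (LieAlgebra.ad 𝕜 L v) ∘ₗ S))
          - 2 * σ u v) := by
  intro u v
  have hqu : ∀ i j : ι, killingForm 𝕜 L ⁅b' i, b' j⁆ u = killingForm 𝕜 L (b' i) ⁅b' j, u⁆ :=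
    fun i j => kinv _ _ _
  have hqu' : ∀ i j : ι, killingForm 𝕜 L ⁅b' i, b' j⁆ u
      = -(killingForm 𝕜 L (b' j) ⁅b' i, u⁆) := by
    intro i j
    rw [show (⁅b' i, b' j⁆ : L) = -⁅b' j, b' i⁆ by rw [lie_skew], map_neg,
      LinearMap.neg_apply, kinv]
  have hqv' : ∀ k l : ι, killingForm 𝕜 L ⁅b' k, b' l⁆ v
      = -(killingForm 𝕜 L (b' l) ⁅b' k, v⁆) := by
    intro k l
    rw [show (⁅b' k, b' l⁆ : L) = -⁅b' l, b' k⁆ by rw [lie_skew], map_neg,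
      LinearMap.neg_apply, kinv]
  -- inner contraction over l, with a spectator factor c
  have hinner : ∀ (w p : L) (c : 𝕜) (k : ι),
      ∑ l, σ w ⁅p, b l⁆ * c * killingForm 𝕜 L ⁅b' k, b' l⁆ v
        = -(σ w ⁅p, ⁅b' k, v⁆⁆ * c) := by
    intro w p c k
    calc ∑ l, σ w ⁅p, b l⁆ * c * killingForm 𝕜 L ⁅b' k, b' l⁆ v
        = ∑ l, -(σ w ⁅p, b l⁆ * killingForm 𝕜 L (b' l) ⁅b' k, v⁆ * c) := by
          refine Finset.sum_congr rfl fun l _ => ?_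
          rw [hqv' k l]; ring
      _ = -((∑ l, σ w ⁅p, b l⁆ * killingForm 𝕜 L (b' l) ⁅b' k, v⁆) * c) := by
          rw [Finset.sum_neg_distrib, Finset.sum_mul]
      _ = -(σ w ⁅p, ⁅b' k, v⁆⁆ * c) := by
          rw [contrS2 b b' hdual σ w p ⁅b' k, v⁆]
  -- Term 1
  have hT1 : ∑ i, ∑ j, ∑ k, ∑ l, σ ⁅b i, b j⁆ ⁅b k, b l⁆ *
        killingForm 𝕜 L ⁅b' i, b' j⁆ u * killingForm 𝕜 L ⁅b' k, b' l⁆ v = σ u v := by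
    calc ∑ i, ∑ j, ∑ k, ∑ l, σ ⁅b i, b j⁆ ⁅b k, b l⁆ *
          killingForm 𝕜 L ⁅b' i, b' j⁆ u * killingForm 𝕜 L ⁅b' k, b' l⁆ v
        = ∑ i, ∑ j, ∑ k, -(σ ⁅b i, b j⁆ ⁅b k, ⁅b' k, v⁆⁆ *
            killingForm 𝕜 L ⁅b' i, b' j⁆ u) := by
          refine Finset.sum_congr rfl fun i _ => Finset.sum_congr rfl fun j _ =>
            Finset.sum_congr rfl fun k _ => ?_
          exact hinner ⁅b i, b j⁆ (b k) (killingForm 𝕜 L ⁅b' i, b' j⁆ u) k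
      _ = ∑ i, ∑ j, -(σ ⁅b i, b j⁆ v * killingForm 𝕜 L ⁅b' i, b' j⁆ u) := by
          refine Finset.sum_congr rfl fun i _ => Finset.sum_congr rfl fun j _ => ?_
          rw [Finset.sum_neg_distrib, ← Finset.sum_mul,
            casτ2 b b' hdual σ ⁅b i, b j⁆ v]
      _ = ∑ i, ∑ j, σ ⁅b i, b j⁆ v * killingForm 𝕜 L (b' j) ⁅b' i, u⁆ := by
          refine Finset.sum_congr rfl fun i _ => Finset.sum_congr rfl fun j _ => ?_
          rw [hqu' i j]; ring
      _ = ∑ i, σ ⁅b i, ⁅b' i, u⁆⁆ v := by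
          refine Finset.sum_congr rfl fun i _ => ?_
          exact contrS3 b b' hdual σ (b i) v ⁅b' i, u⁆
      _ = σ u v := casτ1 b b' hdual σ u v
  -- Term 2
  have hT2 : ∑ i, ∑ j, ∑ k, ∑ l, σ ⁅b j, b k⁆ ⁅b i, b l⁆ *
        killingForm 𝕜 L ⁅b' i, b' j⁆ u * killingForm 𝕜 L ⁅b' k, b' l⁆ v
      = -(∑ j, ∑ k, σ ⁅b j, b k⁆ ⁅⁅b' j, u⁆, ⁅b' k, v⁆⁆) := by
    calc ∑ i, ∑ j, ∑ k, ∑ l, σ ⁅b j, b k⁆ ⁅b i, b l⁆ *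
          killingForm 𝕜 L ⁅b' i, b' j⁆ u * killingForm 𝕜 L ⁅b' k, b' l⁆ v
        = ∑ i, ∑ j, ∑ k, -(σ ⁅b j, b k⁆ ⁅b i, ⁅b' k, v⁆⁆ *
            killingForm 𝕜 L ⁅b' i, b' j⁆ u) := by
          refine Finset.sum_congr rfl fun i _ => Finset.sum_congr rfl fun j _ =>
            Finset.sum_congr rfl fun k _ => ?_
          exact hinner ⁅b j, b k⁆ (b i) (killingForm 𝕜 L ⁅b' i, b' j⁆ u) k
      _ = ∑ j, ∑ k, ∑ i, -(σ ⁅b j, b k⁆ ⁅b i, ⁅b' k, v⁆⁆ *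
            killingForm 𝕜 L ⁅b' i, b' j⁆ u) := by
          rw [Finset.sum_comm]
          exact Finset.sum_congr rfl fun j _ => Finset.sum_comm
      _ = ∑ j, ∑ k, -(σ ⁅b j, b k⁆ ⁅⁅b' j, u⁆, ⁅b' k, v⁆⁆) := by
          refine Finset.sum_congr rfl fun j _ => Finset.sum_congr rfl fun k _ => ?_
          rw [Finset.sum_neg_distrib]
          congr 1
          calc ∑ i, σ ⁅b j, b k⁆ ⁅b i, ⁅b' k, v⁆⁆ * killingForm 𝕜 L ⁅b' i, b' j⁆ u
              = ∑ i, σ ⁅b j, b k⁆ ⁅b i, ⁅b' k, v⁆⁆ *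
                  killingForm 𝕜 L (b' i) ⁅b' j, u⁆ := by
                refine Finset.sum_congr rfl fun i _ => ?_
                rw [hqu i j]
            _ = σ ⁅b j, b k⁆ ⁅⁅b' j, u⁆, ⁅b' k, v⁆⁆ :=
                contrS1 b b' hdual σ ⁅b j, b k⁆ ⁅b' k, v⁆ ⁅b' j, u⁆
      _ = -(∑ j, ∑ k, σ ⁅b j, b k⁆ ⁅⁅b' j, u⁆, ⁅b' k, v⁆⁆) := by
          rw [← Finset.sum_neg_distrib]
          exact Finset.sum_congr rfl fun j _ => Finset.sum_neg_distrib _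
  -- Term 3
  have hT3 : ∑ i, ∑ j, ∑ k, ∑ l, σ ⁅b k, b i⁆ ⁅b j, b l⁆ *
        killingForm 𝕜 L ⁅b' i, b' j⁆ u * killingForm 𝕜 L ⁅b' k, b' l⁆ v
      = -(∑ j, ∑ k, σ ⁅b j, b k⁆ ⁅⁅b' j, u⁆, ⁅b' k, v⁆⁆) := by
    calc ∑ i, ∑ j, ∑ k, ∑ l, σ ⁅b k, b i⁆ ⁅b j, b l⁆ *
          killingForm 𝕜 L ⁅b' i, b' j⁆ u * killingForm 𝕜 L ⁅b' k, b' l⁆ v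
        = ∑ i, ∑ j, ∑ k, -(σ ⁅b k, b i⁆ ⁅b j, ⁅b' k, v⁆⁆ *
            killingForm 𝕜 L ⁅b' i, b' j⁆ u) := by
          refine Finset.sum_congr rfl fun i _ => Finset.sum_congr rfl fun j _ =>
            Finset.sum_congr rfl fun k _ => ?_
          exact hinner ⁅b k, b i⁆ (b j) (killingForm 𝕜 L ⁅b' i, b' j⁆ u) k
      _ = ∑ i, ∑ k, ∑ j, -(σ ⁅b k, b i⁆ ⁅b j, ⁅b' k, v⁆⁆ *
            killingForm 𝕜 L ⁅b' i, b' j⁆ u) := by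
          exact Finset.sum_congr rfl fun i _ => Finset.sum_comm
      _ = ∑ i, ∑ k, σ ⁅b k, b i⁆ ⁅⁅b' i, u⁆, ⁅b' k, v⁆⁆ := by
          refine Finset.sum_congr rfl fun i _ => Finset.sum_congr rfl fun k _ => ?_
          calc ∑ j, -(σ ⁅b k, b i⁆ ⁅b j, ⁅b' k, v⁆⁆ *
                killingForm 𝕜 L ⁅b' i, b' j⁆ u)
              = ∑ j, σ ⁅b k, b i⁆ ⁅b j, ⁅b' k, v⁆⁆ *
                killingForm 𝕜 L (b' j) ⁅b' i, u⁆ := by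
                refine Finset.sum_congr rfl fun j _ => ?_
                rw [hqu' i j]; ring
            _ = σ ⁅b k, b i⁆ ⁅⁅b' i, u⁆, ⁅b' k, v⁆⁆ :=
                contrS1 b b' hdual σ ⁅b k, b i⁆ ⁅b' k, v⁆ ⁅b' i, u⁆
      _ = -(∑ j, ∑ k, σ ⁅b j, b k⁆ ⁅⁅b' j, u⁆, ⁅b' k, v⁆⁆) := by
          rw [← Finset.sum_neg_distrib]
          refine Finset.sum_congr rfl fun i _ => ?_
          rw [← Finset.sum_neg_distrib]
          refine Finset.sum_congr rfl fun k _ => ?_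
          rw [show (⁅b k, b i⁆ : L) = -⁅b i, b k⁆ by rw [lie_skew], map_neg,
            LinearMap.neg_apply]
  have hZ := Zform b b' hdual σ hσ S hS u v
  have hS'f := trace_S' b b' hdual S S' hS' u v
  have hcomp : (LieAlgebra.ad 𝕜 L u) ∘ₗ (LieAlgebra.ad 𝕜 L v) ∘ₗ S
      = LieAlgebra.ad 𝕜 L u * LieAlgebra.ad 𝕜 L v * S := rfl
  simp only [add_mul, Finset.sum_add_distrib]
  rw [hT1, hT2, hT3, hZ, hS'f, hcomp]
  ring
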